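/- Let k ≥ 1 and let i = (i_1,…,i_k) be a primitive word of length k over 𝕀. Then there exists a unique g ∈ 𝕀^k such that std(g) is a k-cycle (x_1,…,x_k) of type i, i.e., such that std(g) is a k-cycle and, writing its support in cyclic order as (x_1,…,x_k) with std(g)(x_j) = x_{j+1} (indices mod k), one has g_{x_j} = i_j for all j. -/

import Mathlib

/-- A word (finite list) is primitive if it is not a nontrivial power `y^m`, `m ≥ 2`,
of another word. -/
def IsPrimitiveWord {α : Type*} (w : List α) : Prop :=
  ¬ ∃ (y : List α) (m : ℕ), 2 ≤ m ∧ w = (List.replicate m y).flatten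

/-- Lexicographic comparison on `ℕ → ℝ` is decided by the head and the tail. -/
private lemma lex_cons {a b : ℕ → ℝ} :
    toLex a < toLex b ↔
      a 0 < b 0 ∨ (a 0 = b 0 ∧ toLex (fun n => a (n+1)) < toLex (fun n => b (n+1))) := by
  show Pi.Lex (· < ·) (· < ·) a b ↔ _ ∨ (_ ∧ Pi.Lex (· < ·) (· < ·) _ _)
  constructor
  · rintro ⟨i, hlt, hi⟩
    match i with
    | 0 => exact Or.inl hi
    | (n+1) =>
      exact Or.inr ⟨hlt 0 (Nat.succ_pos n), ⟨n, fun j hj => hlt (j+1) (by omega), hi⟩⟩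
  · rintro (h | ⟨h0, n, hlt, hn⟩)
    · exact ⟨0, fun j hj => by omega, h⟩
    · refine ⟨n+1, fun j hj => ?_, hn⟩
      match j with
      | 0 => exact h0
      | (j+1) => exact hlt j (by omega)

/-- An injective map `Fin k → Fin k` is determined by the induced strict order. -/
private lemma rank_det {k : ℕ} (f h : Fin k → Fin k) (hf : Function.Injective f)
    (hh : Function.Injective h) (hord : ∀ a b, f a < f b ↔ h a < h b) : f = h := by
  have hbh : Function.Bijective h := Finite.injective_iff_bijective.mp hh
  have hbf : Function.Bijective f := Finite.injective_iff_bijective.mp hf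
  let e := Equiv.ofBijective h hbh
  have hm : StrictMono (f ∘ e.symm) := by
    intro a b hab
    refine (hord _ _).mpr ?_
    show h (e.symm a) < h (e.symm b)
    have ha : h (e.symm a) = a := e.apply_symm_apply a
    have hb : h (e.symm b) = b := e.apply_symm_apply b
    rw [ha, hb]; exact hab
  have hmid : StrictMono (id : Fin k → Fin k) := strictMono_id
  have hr : Set.range (f ∘ e.symm) = Set.range (id : Fin k → Fin k) := by
    rw [Set.range_comp, Set.range_eq_univ.mpr e.symm.surjective, Set.image_univ,
      hbf.surjective.range_eq, Set.range_id]
  have iwf : WellFoundedLT (Fin k) := inferInstance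
  have hid : f ∘ e.symm = id :=
    (@StrictMono.range_inj (Fin k) (Fin k) inferInstance inferInstance iwf _ _ hm hmid).mp hr
  funext a
  have := congrFun hid (h a)
  simpa [e] using this

/-- A list all of whose entries repeat with period `e` is a power of its prefix. -/
private lemma build_word : ∀ (m : ℕ) (w : List ℝ) (e : ℕ), 0 < e → w.length = e * m →
    (∀ n, n < w.length → n % e < w.length ∧ ∀ (h : n < w.length) (h' : n % e < w.length),
        w.get ⟨n, h⟩ = w.get ⟨n % e, h'⟩) →
    w = (List.replicate m (w.take e)).flatten := by
  intro m
  induction m with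
  | zero =>
    intro w e he hlen _
    have h0 : w = [] := List.length_eq_zero_iff.mp (by simpa using hlen)
    simp [h0]
  | succ m ih =>
    intro w e he hlen hper
    have hmul : e * (m + 1) = e * m + e := by ring
    have hlw : e ≤ w.length := by omega
    have hdl : (w.drop e).length = e * m := by
      rw [List.length_drop, hlen]; omega
    have hmlt : ∀ n : ℕ, n % e < w.length := fun n =>
      lt_of_lt_of_le (Nat.mod_lt _ he) hlw
    have hkey : ∀ n (hn : n < (w.drop e).length),
        (w.drop e).get ⟨n, hn⟩ = w.get ⟨n % e, hmlt n⟩ := by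
      intro n hn
      have hn' : n < e * m := by rwa [hdl] at hn
      have h1 : (w.drop e).get ⟨n, hn⟩ = w.get ⟨e + n, by omega⟩ := by
        simp [List.getElem_drop]
      have h2 : (e + n) % e = n % e := Nat.add_mod_left e n
      have h3 := (hper (e + n) (by omega)).2 (by omega) (hmlt (e+n))
      rw [h1, h3]
      congr 1
      exact Fin.ext h2
    have hdrop : w.drop e = (List.replicate m ((w.drop e).take e)).flatten := by
      apply ih _ e he hdl
      intro n hn
      have hn2 : n % e < (w.drop e).length := by
        rcases Nat.eq_zero_or_pos m with rfl | hm
        · omega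
        · have := Nat.mod_lt n he
          have : e ≤ e * m := Nat.le_mul_of_pos_right e hm
          omega
      refine ⟨hn2, fun h h' => ?_⟩
      rw [hkey n h, hkey (n % e) h']
      congr 1
      exact Fin.ext ((Nat.mod_mod_of_dvd n (dvd_refl e)).symm)
    rcases Nat.eq_zero_or_pos m with rfl | hm
    · have hww : w.take e = w := List.take_of_length_le (by omega)
      simp [List.replicate_succ, hww]
    · have hem : e ≤ e * m := Nat.le_mul_of_pos_right e hm
      have htake : (w.drop e).take e = w.take e := by
        apply List.ext_get
        · simp only [List.length_take, hdl, hlen]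
          omega
        · intro n h1 h2
          have hn : n < e := by
            simp only [List.length_take, hdl] at h1; omega
          have ha : ((w.drop e).take e).get ⟨n, h1⟩ =
              (w.drop e).get ⟨n, by rw [hdl]; omega⟩ := by
            simp [List.getElem_take]
          have hb : (w.take e).get ⟨n, h2⟩ = w.get ⟨n, by omega⟩ := by
            simp [List.getElem_take]
          rw [ha, hb, hkey n (by rw [hdl]; omega)]
          congr 1
          exact Fin.ext (Nat.mod_eq_of_lt hn)
      calc w = w.take e ++ w.drop e := (List.take_append_drop e w).symm
        _ = w.take e ++ (List.replicate m (w.take e)).flatten := by rw [hdrop, htake]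
        _ = (List.replicate (m+1) (w.take e)).flatten := by
            rw [List.replicate_succ, List.flatten_cons]

/-- let `std` be the standardization map on sequences of length `k`
(characterized by `std g j < std g m ↔ g j < g m ∨ (g j = g m ∧ j < m)`), and let
`w = (i_1, …, i_k)` be a primitive word of length `k ≥ 1` over `𝕀`. Then there is a unique
`g ∈ 𝕀^k` such that `std g` is a `k`-cycle `(x_1, …, x_k)` of type `w`, i.e. `std g` maps each
`x_j` to `x_{j+1}` (indices mod `k`, with `x` injective) and `g (x_j) = i_j` for all `j`. -/
theorem stmt14 (𝕀 : Set ℝ) (k : ℕ) (hk : 1 ≤ k)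
    (std : (Fin k → ℝ) → Equiv.Perm (Fin k))
    (hstd : ∀ (g : Fin k → ℝ) (j m : Fin k),
      std g j < std g m ↔ (g j < g m ∨ (g j = g m ∧ j < m)))
    (w : List ℝ) (hlen : w.length = k) (hprim : IsPrimitiveWord w)
    (hw𝕀 : ∀ a ∈ w, a ∈ 𝕀) :
    ∃! g : Fin k → ℝ, (∀ j, g j ∈ 𝕀) ∧
      ∃ x : Fin k → Fin k, Function.Injective x ∧
        (∀ j : Fin k, std g (x j) = x ⟨((j : ℕ) + 1) % k, Nat.mod_lt _ j.pos⟩) ∧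
        ∀ j : Fin k, g (x j) = w.get (Fin.cast hlen.symm j) := by
  classical
  have hk0 : 0 < k := hk
  set wf : Fin k → ℝ := fun j => w.get (Fin.cast hlen.symm j) with hwfdef
  have hmemI : ∀ j, wf j ∈ 𝕀 := fun j =>
    hw𝕀 _ (List.get_mem w (Fin.cast hlen.symm j))
  -- periodic extension of the word
  let W : ℕ → ℝ := fun n => wf ⟨n % k, Nat.mod_lt _ hk0⟩
  have hWc : ∀ a b : ℕ, (a : ZMod k) = (b : ZMod k) → W a = W b := by
    intro a b hab
    have h := (ZMod.natCast_eq_natCast_iff a b k).mp hab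
    show wf ⟨a % k, Nat.mod_lt _ hk0⟩ = wf ⟨b % k, Nat.mod_lt _ hk0⟩
    congr 1
    exact Fin.ext h
  have hkm1 : ((k-1 : ℕ) : ZMod k) = -1 := by
    have h1 : ((k-1+1 : ℕ) : ZMod k) = 0 := by
      rw [Nat.sub_add_cancel hk]; exact ZMod.natCast_self k
    push_cast at h1
    exact eq_neg_of_add_eq_zero_left h1
  have hcast : ∀ n : ℕ, ((n % k : ℕ) : ZMod k) = (n : ZMod k) := fun n => ZMod.natCast_mod n k
  -- the backwards-read periodic words
  let v : Fin k → ℕ → ℝ := fun j n => W (j.val + (n+1) * (k-1))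
  let sc : Fin k → Fin k := fun j => ⟨(j.val + 1) % k, Nat.mod_lt _ hk0⟩
  let pd : Fin k → Fin k := fun j => ⟨(j.val + (k-1)) % k, Nat.mod_lt _ hk0⟩
  have hsp : ∀ j, sc (pd j) = j := by
    intro j
    apply Fin.ext
    show ((j.val + (k-1)) % k + 1) % k = j.val
    rw [Nat.mod_add_mod]
    have h1 : j.val + (k-1) + 1 = j.val + k := by omega
    rw [h1, Nat.add_mod_right, Nat.mod_eq_of_lt j.isLt]
  have hps : ∀ j, pd (sc j) = j := by
    intro j
    apply Fin.ext
    show ((j.val + 1) % k + (k-1)) % k = j.val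
    rw [Nat.mod_add_mod]
    have h1 : j.val + 1 + (k-1) = j.val + k := by omega
    rw [h1, Nat.add_mod_right, Nat.mod_eq_of_lt j.isLt]
  have hWj : ∀ j : Fin k, W j.val = wf j := by
    intro j
    show wf ⟨j.val % k, Nat.mod_lt _ hk0⟩ = wf j
    congr 1
    exact Fin.ext (Nat.mod_eq_of_lt j.isLt)
  have hv0 : ∀ j, v (sc j) 0 = wf j := by
    intro j
    rw [← hWj j]
    show W ((j.val + 1) % k + (0+1) * (k-1)) = W j.val
    apply hWc
    push_cast [hcast, hkm1]
    ring
  have hvs : ∀ j n, v (sc j) (n+1) = v j n := by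
    intro j n
    show W ((j.val + 1) % k + (n+1+1) * (k-1)) = W (j.val + (n+1) * (k-1))
    apply hWc
    push_cast [hcast, hkm1]
    ring
  have htail : ∀ j, (fun n => v j (n+1)) = v (pd j) := by
    intro j
    funext n
    calc v j (n+1) = v (sc (pd j)) (n+1) := by rw [hsp]
      _ = v (pd j) n := hvs _ _
  have hv0' : ∀ j, v j 0 = wf (pd j) := by
    intro j
    have := hv0 (pd j)
    rw [hsp j] at this
    exact this
  -- injectivity of `v` from primitivity
  have hvinj : Function.Injective v := by
    intro j m hjm
    by_contra hne
    have key : ∀ a b : Fin k, v a = v b → ∀ t : ℕ, W (t + a.val) = W (t + b.val) := by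
      intro a b hab t
      have h1 : W (a.val + (((k-1)*t + k - 1) + 1) * (k-1))
          = W (b.val + (((k-1)*t + k - 1) + 1) * (k-1)) := congrFun hab ((k-1)*t + k - 1)
      have hn1 : ((k-1)*t + k - 1) + 1 = (k-1)*t + k := by omega
      rw [hn1] at h1
      calc W (t + a.val) = W (a.val + ((k-1)*t + k) * (k-1)) := by
            apply hWc; push_cast [hkm1, ZMod.natCast_self]; ring
        _ = W (b.val + ((k-1)*t + k) * (k-1)) := h1
        _ = W (t + b.val) := by
            apply hWc; push_cast [hkm1, ZMod.natCast_self]; ring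
    have main : ∀ (a b : Fin k), a.val < b.val → (∀ t, W (t + a.val) = W (t + b.val)) → False := by
      intro a b hab hkey
      have hbk : b.val < k := b.isLt
      set e : ℕ := k - (b.val - a.val) with he
      have he1 : 0 < e := by omega
      have he2 : e < k := by omega
      have hPe : ∀ s, W (s + e) = W s := by
        intro s
        calc W (s + e) = W ((s + k - b.val) + a.val) := congrArg W (by omega)
          _ = W ((s + k - b.val) + b.val) := hkey _
          _ = W (s + k) := congrArg W (by omega)
          _ = W s := hWc _ _ (by push_cast [ZMod.natCast_self]; ring)
      have hPk : ∀ s, W (s + k) = W s := fun s =>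
        hWc _ _ (by push_cast [ZMod.natCast_self]; ring)
      -- gcd of two periods is a period
      have gcdP : ∀ d : ℕ, ∀ c : ℕ, (∀ s, W (s + d) = W s) → (∀ s, W (s + c) = W s) →
          ∀ s, W (s + Nat.gcd d c) = W s := by
        intro d
        induction d using Nat.strong_induction_on with
        | _ d ih =>
          intro c hd hc s
          rcases Nat.eq_zero_or_pos d with rfl | hd0
          · simpa [Nat.gcd_zero_left] using hc s
          · rw [Nat.gcd_rec d c]
            refine ih (c % d) (Nat.mod_lt _ hd0) d ?_ hd s
            intro s'
            have hmulP : ∀ q s'', W (s'' + d * q) = W s'' := by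
              intro q
              induction q with
              | zero => simp
              | succ q ihq =>
                intro s''
                have hq : s'' + d*(q+1) = (s'' + d*q) + d := by ring
                rw [hq, hd, ihq]
            have hc' : c % d + d * (c/d) = c := Nat.mod_add_div c d
            calc W (s' + c % d) = W ((s' + c % d) + d * (c / d)) := (hmulP _ _).symm
              _ = W (s' + c) := congrArg W (by omega)
              _ = W s' := hc s'
      set e' : ℕ := Nat.gcd e k with he'
      have hPe' : ∀ s, W (s + e') = W s := gcdP e k hPe hPk
      have he'1 : 0 < e' := Nat.gcd_pos_of_pos_left k he1
      have he'k : e' < k := lt_of_le_of_lt (Nat.gcd_le_left k he1) he2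
      have he'dvd : e' ∣ k := Nat.gcd_dvd_right e k
      -- derive non-primitivity
      obtain ⟨m', hm'⟩ := he'dvd
      have hm'2 : 2 ≤ m' := by
        rcases m' with _ | _ | m'
        · omega
        · omega
        · omega
      have hWper : ∀ n, W n = W (n % e') := by
        intro n
        induction n using Nat.strong_induction_on with
        | _ n ih =>
          rcases lt_or_ge n e' with h | h
          · rw [Nat.mod_eq_of_lt h]
          · calc W n = W ((n - e') + e') := congrArg W (by omega)
              _ = W (n - e') := hPe' _
              _ = W ((n - e') % e') := ih _ (by omega)
              _ = W (n % e') := congrArg W ((Nat.mod_eq_sub_mod h).symm)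
      have hwW : ∀ n (h : n < w.length), w.get ⟨n, h⟩ = W n := by
        intro n h
        have hnk : n < k := by omega
        have h2 : (⟨n % k, Nat.mod_lt _ hk0⟩ : Fin k) = ⟨n, hnk⟩ :=
          Fin.ext (Nat.mod_eq_of_lt hnk)
        show w.get ⟨n, h⟩ = wf ⟨n % k, Nat.mod_lt _ hk0⟩
        rw [h2]
        rfl
      refine hprim ⟨w.take e', m', hm'2, ?_⟩
      apply build_word m' w e' he'1 (by omega)
      intro n hn
      have hlt : n % e' < w.length := by
        have := Nat.mod_lt n he'1
        omega
      refine ⟨hlt, fun h h' => ?_⟩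
      rw [hwW n h, hwW (n % e') h']
      exact hWper n
    rcases lt_trichotomy j.val m.val with h | h | h
    · exact main j m h (key j m hjm)
    · exact hne (Fin.ext h)
    · exact main m j h (key m j hjm.symm)
  -- the rank map
  have hvinj' : Function.Injective (fun j : Fin k => toLex (v j)) := by
    intro a b hab
    exact hvinj (by simpa using hab)
  let S : Finset (Lex (ℕ → ℝ)) := Finset.univ.image (fun j : Fin k => toLex (v j))
  have hcard : S.card = k := by
    rw [Finset.card_image_of_injective _ hvinj', Finset.card_univ, Fintype.card_fin]
  let φ := S.orderIsoOfFin hcard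
  have hmem : ∀ j, toLex (v j) ∈ S := fun j => Finset.mem_image_of_mem _ (Finset.mem_univ j)
  let x : Fin k → Fin k := fun j => φ.symm ⟨toLex (v j), hmem j⟩
  have hxlt : ∀ a b, x a < x b ↔ toLex (v a) < toLex (v b) := by
    intro a b
    show φ.symm _ < φ.symm _ ↔ _
    rw [φ.symm.lt_iff_lt]
    exact Subtype.mk_lt_mk
  have hxinj : Function.Injective x := by
    intro a b hab
    have h1 : (⟨toLex (v a), hmem a⟩ : {y // y ∈ S}) = ⟨toLex (v b), hmem b⟩ :=
      φ.symm.injective hab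
    exact hvinj (by simpa using Subtype.ext_iff.mp h1)
  have hxb : Function.Bijective x := Finite.injective_iff_bijective.mp hxinj
  let xe : Equiv.Perm (Fin k) := Equiv.ofBijective x hxb
  set g : Fin k → ℝ := fun q => wf (xe.symm q) with hgdef
  have hgx : ∀ j, g (x j) = wf j := by
    intro j
    show wf (xe.symm (xe j)) = wf j
    rw [xe.symm_apply_apply]
  -- the key recursion for the lex order
  have hrec : ∀ a b, toLex (v (sc a)) < toLex (v (sc b)) ↔
      (wf a < wf b ∨ (wf a = wf b ∧ toLex (v a) < toLex (v b))) := by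
    intro a b
    rw [lex_cons, hv0 a, hv0 b]
    have ta : (fun n => v (sc a) (n+1)) = v a := by rw [htail (sc a), hps a]
    have tb : (fun n => v (sc b) (n+1)) = v b := by rw [htail (sc b), hps b]
    rw [ta, tb]
  -- existence: the cycle property of `std g`
  have hscinj : Function.Injective sc := by
    intro a b hab
    rw [← hps a, ← hps b, hab]
  have hmain : (fun j => std g (x j)) = (fun j => x (sc j)) := by
    apply rank_det _ _ ((std g).injective.comp hxinj) (hxinj.comp hscinj)
    intro a b
    show std g (x a) < std g (x b) ↔ x (sc a) < x (sc b)
    rw [hstd g (x a) (x b), hgx a, hgx b, hxlt a b, hxlt (sc a) (sc b), hrec a b]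
  have hcyc : ∀ j : Fin k, std g (x j) = x (sc j) := fun j => congrFun hmain j
  refine ⟨g, ⟨fun q => hmemI _, ⟨x, hxinj, fun j => hcyc j, fun j => hgx j⟩⟩, ?_⟩
  -- uniqueness
  rintro g' ⟨hg'mem, x', hx'inj, hx'cyc, hx'type⟩
  have hx'type' : ∀ j, g' (x' j) = wf j := fun j => hx'type j
  have hx'cyc' : ∀ j, std g' (x' j) = x' (sc j) := fun j => hx'cyc j
  have hstep : ∀ a b, x' (sc a) < x' (sc b) ↔
      (wf a < wf b ∨ (wf a = wf b ∧ x' a < x' b)) := by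
    intro a b
    have hc := hstd g' (x' a) (x' b)
    rw [hx'cyc' a, hx'cyc' b, hx'type' a, hx'type' b] at hc
    exact hc
  have hrecP : ∀ a b, x' a < x' b ↔
      (wf (pd a) < wf (pd b) ∨ (wf (pd a) = wf (pd b) ∧ x' (pd a) < x' (pd b))) := by
    intro a b
    have := hstep (pd a) (pd b)
    rw [hsp a, hsp b] at this
    exact this
  have huniq : ∀ n : ℕ, ∀ a b : Fin k, (∀ p, p < n → v a p = v b p) → v a n ≠ v b n →
      (x' a < x' b ↔ toLex (v a) < toLex (v b)) := by
    intro n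
    induction n with
    | zero =>
      intro a b _ hne
      have hne' : wf (pd a) ≠ wf (pd b) := by
        rw [← hv0' a, ← hv0' b]; exact hne
      rw [hrecP a b, lex_cons, hv0' a, hv0' b]
      constructor
      · rintro (h | ⟨h, _⟩)
        · exact Or.inl h
        · exact absurd h hne'
      · rintro (h | ⟨h, _⟩)
        · exact Or.inl h
        · exact absurd h hne'
    | succ n ih =>
      intro a b hagree hne
      have h0 : v a 0 = v b 0 := hagree 0 (Nat.succ_pos n)
      have hw0 : wf (pd a) = wf (pd b) := by rw [← hv0' a, ← hv0' b]; exact h0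
      have hagree' : ∀ p, p < n → v (pd a) p = v (pd b) p := by
        intro p hp
        rw [← congrFun (htail a) p, ← congrFun (htail b) p]
        exact hagree (p+1) (by omega)
      have hne' : v (pd a) n ≠ v (pd b) n := by
        rw [← congrFun (htail a) n, ← congrFun (htail b) n]
        exact hne
      have ihab := ih (pd a) (pd b) hagree' hne'
      rw [hrecP a b, lex_cons, hv0' a, hv0' b, htail a, htail b, ihab]
  have hx'lt : ∀ a b, x' a < x' b ↔ toLex (v a) < toLex (v b) := by
    intro a b
    rcases eq_or_ne a b with rfl | hab
    · constructor
      · intro h; exact absurd h (lt_irrefl _)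
      · intro h; exact absurd h (lt_irrefl _)
    · have hvne : v a ≠ v b := fun hh => hab (hvinj hh)
      rw [Function.ne_iff] at hvne
      exact huniq (Nat.find hvne) a b
        (fun p hp => not_not.mp (Nat.find_min hvne hp)) (Nat.find_spec hvne)
  have hxx : x' = x :=
    rank_det x' x hx'inj hxinj (fun a b => (hx'lt a b).trans (hxlt a b).symm)
  funext q
  obtain ⟨j, rfl⟩ := hxb.surjective q
  calc g' (x j) = g' (x' j) := by rw [hxx]
    _ = wf j := hx'type' j
    _ = g (x j) := (hgx j).symm
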